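/- For any motif a ∈ M^n, the polarization of its Lagrange polynomial equals the Lagrange polynomial of the motif obtained by barring a, polarizing, and barring again: (L_a)^p = L_{\overline{\overline{a}^p}} in F_2[X_1,...,X_n,Y_1,...,Y_n]. -/

import Mathlib

open MvPolynomial

/-- The field with two elements. -/
abbrev F2 := ZMod 2

/-- A motif indexed by `ι`: at each index it is `0`, `1`, or `*` (represented by `none`). -/
abbrev Motif (ι : Type*) := ι → Option F2

/-- The partial order on motifs: `a ≤ b` iff `a i = b i` for every index `i` with `b i ≠ *`. -/
def MotifLE {ι : Type*} (a b : Motif ι) : Prop :=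
  ∀ (i : ι) (x : F2), b i = some x → a i = some x

/-- The variety of a motif: all words agreeing with the motif on its non-`*` coordinates. -/
def variety {ι : Type*} (a : Motif ι) : Set (ι → F2) :=
  {w | ∀ (i : ι) (x : F2), a i = some x → w i = x}

/-- `a` is a motif of the code `C` iff its variety is contained in `C`. -/
def IsMotifOf {ι : Type*} (C : Set (ι → F2)) (a : Motif ι) : Prop :=
  variety a ⊆ C

/-- The set of maximal motifs of a code `C`. -/
def maxMot {ι : Type*} (C : Set (ι → F2)) : Set (Motif ι) :=
  {a | IsMotifOf C a ∧ ∀ b : Motif ι, IsMotifOf C b → MotifLE a b → a = b}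

/-- Two motifs are disjoint if at some index both are non-`*` and they differ. -/
def DisjointMotifs {ι : Type*} (a b : Motif ι) : Prop :=
  ∃ (i : ι) (x : F2), a i = some x ∧ b i = some (1 - x)

/-- Polarization of a motif of length `n`, as a motif of length `2n`
(indexed by `Fin n ⊕ Fin n`; `Sum.inl i` is coordinate `i`, `Sum.inr i` is coordinate `n+i`). -/
def polMotif {n : ℕ} (a : Motif (Fin n)) : Motif (Fin n ⊕ Fin n)
  | Sum.inl i => if a i = some 0 then some 0 else none
  | Sum.inr i => if a i = some 1 then some 0 else none

/-- The bar of a motif: `0 ↦ 1`, `1 ↦ 0`, `* ↦ *`. -/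
def barMotif {ι : Type*} (a : Motif ι) : Motif ι :=
  fun i => (a i).map (fun x => 1 - x)

/-- The polarization of a code `C ⊆ F₂ⁿ`: the union of the varieties of the
polarizations of the maximal motifs of `C`. -/
def polCode {n : ℕ} (C : Set (Fin n → F2)) : Set ((Fin n ⊕ Fin n) → F2) :=
  ⋃ a ∈ maxMot C, variety (polMotif a)

/-- The code `over-over-D-p` : the union of the varieties of `bar (pol (bar b))`
over the maximal motifs `b` of `D`. -/
def barPolBarCode {n : ℕ} (D : Set (Fin n → F2)) : Set ((Fin n ⊕ Fin n) → F2) :=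
  ⋃ b ∈ maxMot D, variety (barMotif (polMotif (barMotif b)))

/-- The formal polarization of a code `C`: the complement of `barPolBarCode` of `Cᶜ`. -/
def formalPol {n : ℕ} (C : Set (Fin n → F2)) : Set ((Fin n ⊕ Fin n) → F2) :=
  (barPolBarCode Cᶜ)ᶜ

/-- The Lagrange polynomial of a motif. -/
noncomputable def lagrange {ι : Type*} [Fintype ι] (a : Motif ι) : MvPolynomial ι F2 :=
  (∏ i ∈ Finset.univ.filter (fun i => a i = some 1), X i) *
    ∏ j ∈ Finset.univ.filter (fun j => a j = some 0), (1 - X j)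

/-- The motif (with no stars) corresponding to a word. -/
def wordMotif {ι : Type*} (w : ι → F2) : Motif ι := fun i => some (w i)

/-- The neural ideal of a code: generated by the Lagrange polynomials of the
words in the complement of the code. -/
noncomputable def neuralIdeal {ι : Type*} [Fintype ι] (C : Set (ι → F2)) :
    Ideal (MvPolynomial ι F2) :=
  Ideal.span ((fun w => lagrange (wordMotif w)) '' Cᶜ)

/-- The pseudo-monomial `∏_{i ∈ σ} X i * ∏_{j ∈ τ} (1 - X j)`. -/
noncomputable def pm {ι : Type*} (σ τ : Finset ι) : MvPolynomial ι F2 :=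
  (∏ i ∈ σ, X i) * ∏ j ∈ τ, (1 - X j)

/-- A polynomial is a pseudo-monomial if it equals `pm σ τ` for disjoint `σ τ`. -/
def IsPseudoMonomial {ι : Type*} (f : MvPolynomial ι F2) : Prop :=
  ∃ σ τ : Finset ι, Disjoint σ τ ∧ f = pm σ τ

/-- The canonical form of an ideal: the set of its minimal pseudo-monomials, i.e.
pseudo-monomials `f ∈ I` such that no pseudo-monomial `g ∈ I` of strictly smaller
degree divides `f`. -/
def CF {ι : Type*} (I : Ideal (MvPolynomial ι F2)) : Set (MvPolynomial ι F2) :=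
  {f | IsPseudoMonomial f ∧ f ∈ I ∧
    ¬ ∃ g : MvPolynomial ι F2, IsPseudoMonomial g ∧ g ∈ I ∧
      g.totalDegree < f.totalDegree ∧ g ∣ f}

/-- The polarization of the pseudo-monomial with data `(σ, τ)`:
`∏_{i ∈ σ} X i * ∏_{j ∈ τ} Y j` (here `Y j = X (Sum.inr j)`). -/
noncomputable def ppm {n : ℕ} (σ τ : Finset (Fin n)) : MvPolynomial (Fin n ⊕ Fin n) F2 :=
  (∏ i ∈ σ, X (Sum.inl i)) * ∏ j ∈ τ, X (Sum.inr j)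

/-- `g` is the polarization of the pseudo-monomial `f`. -/
def PolPM {n : ℕ} (f : MvPolynomial (Fin n) F2) (g : MvPolynomial (Fin n ⊕ Fin n) F2) : Prop :=
  ∃ σ τ : Finset (Fin n), Disjoint σ τ ∧ f = pm σ τ ∧ g = ppm σ τ

/-- The set of polarizations of the elements of a set of pseudo-monomials. -/
def polSet {n : ℕ} (S : Set (MvPolynomial (Fin n) F2)) :
    Set (MvPolynomial (Fin n ⊕ Fin n) F2) :=
  {g | ∃ f ∈ S, PolPM f g}

/-- The prime ideal of a motif: generated by `X i` for `a i = 0`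
and `1 - X j` for `a j = 1`. -/
noncomputable def pIdeal {ι : Type*} (a : Motif ι) : Ideal (MvPolynomial ι F2) :=
  Ideal.span ({f | ∃ i, a i = some 0 ∧ f = X i} ∪ {f | ∃ j, a j = some 1 ∧ f = 1 - X j})

section Aux

open Finset

lemma eval_pm_eq_one_iff {ι : Type*} (σ τ : Finset ι) (v : ι → F2) :
    MvPolynomial.eval v (pm σ τ) = 1 ↔
      (∀ i ∈ σ, v i = 1) ∧ (∀ j ∈ τ, v j = 0) := by
  have h1 : ∀ x : F2, x = 1 ↔ x ≠ 0 := by decide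
  rw [pm, map_mul, MvPolynomial.eval_prod, MvPolynomial.eval_prod]
  simp only [map_sub, map_one, MvPolynomial.eval_X]
  rw [h1, mul_ne_zero_iff, Finset.prod_ne_zero_iff, Finset.prod_ne_zero_iff]
  constructor
  · rintro ⟨hs, ht⟩
    refine ⟨fun i hi => (h1 _).2 (hs i hi), fun j hj => ?_⟩
    have := ht j hj
    have hv : v j = 0 ∨ v j = 1 := by
      have : ∀ x : F2, x = 0 ∨ x = 1 := by decide
      exact this _
    rcases hv with h | h
    · exact h
    · exact absurd (by rw [h]; decide) this
  · rintro ⟨hs, ht⟩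
    exact ⟨fun i hi => (h1 _).1 (hs i hi), fun j hj => by rw [ht j hj]; decide⟩

lemma pm_inj {ι : Type*} [Fintype ι] [DecidableEq ι] {σ τ σ' τ' : Finset ι}
    (hd : Disjoint σ τ) (hd' : Disjoint σ' τ') (h : pm σ τ = pm σ' τ') :
    σ = σ' ∧ τ = τ' := by
  have key : ∀ (s t s' t' : Finset ι), Disjoint s t → Disjoint s' t' →
      pm s t = pm s' t' → s' ⊆ s ∧ t' ⊆ t := by
    intro s t s' t' hst hst' heq
    classical
    -- evaluation at indicator of s
    have h1 : MvPolynomial.eval (fun i => if i ∈ s then (1:F2) else 0) (pm s t) = 1 := by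
      rw [eval_pm_eq_one_iff]
      refine ⟨fun i hi => by simp [hi], fun j hj => ?_⟩
      have : j ∉ s := fun hjs => (Finset.disjoint_left.1 hst) hjs hj
      simp [this]
    rw [heq, eval_pm_eq_one_iff] at h1
    -- evaluation at complement-indicator of t
    have h2 : MvPolynomial.eval (fun i => if i ∈ t then (0:F2) else 1) (pm s t) = 1 := by
      rw [eval_pm_eq_one_iff]
      refine ⟨fun i hi => ?_, fun j hj => by simp [hj]⟩
      have : i ∉ t := fun hit => (Finset.disjoint_left.1 hst) hi hit
      simp [this]
    rw [heq, eval_pm_eq_one_iff] at h2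
    constructor
    · intro i hi
      have := h1.1 i hi
      by_contra hns
      simp [hns] at this
    · intro j hj
      have := h2.2 j hj
      by_contra hnt
      simp [hnt] at this
  obtain ⟨h1, h2⟩ := key σ τ σ' τ' hd hd' h
  obtain ⟨h3, h4⟩ := key σ' τ' σ τ hd' hd h.symm
  exact ⟨le_antisymm h3 h1, le_antisymm h4 h2⟩

lemma lagrange_eq_pm {ι : Type*} [Fintype ι] [DecidableEq ι] (a : Motif ι) :
    lagrange a = pm (Finset.univ.filter (fun i => a i = some 1))
      (Finset.univ.filter (fun j => a j = some 0)) := rfl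

end Aux

/-- `(L_a)ᵖ = L_{bar((bar a)ᵖ)}`: if `L_a` is the pseudo-monomial with
data `(σ, τ)` (with `σ, τ` disjoint), then its polarization `∏_{i∈σ} X_i ∏_{j∈τ} Y_j`
equals the Lagrange polynomial of `bar((bar a)ᵖ)`. -/
theorem polarization_lagrange {n : ℕ} (a : Motif (Fin n)) :
    ∀ σ τ : Finset (Fin n), Disjoint σ τ → lagrange a = pm σ τ →
      ppm σ τ = lagrange (barMotif (polMotif (barMotif a))) := by
  classical
  intro σ τ hdisj heq
  set σ₀ := Finset.univ.filter (fun i => a i = some 1) with hσ₀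
  set τ₀ := Finset.univ.filter (fun j => a j = some 0) with hτ₀
  have hd₀ : Disjoint σ₀ τ₀ := by
    rw [Finset.disjoint_left]
    intro i hi hj
    simp only [hσ₀, hτ₀, Finset.mem_filter] at hi hj
    rw [hi.2] at hj
    exact absurd hj.2 (by decide)
  have heq' : pm σ₀ τ₀ = pm σ τ := by rw [← lagrange_eq_pm, heq]
  obtain ⟨hσ, hτ⟩ := pm_inj hd₀ hdisj heq'
  -- compute the motif b := barMotif (polMotif (barMotif a))
  set b := barMotif (polMotif (barMotif a)) with hb
  have hbl : ∀ i : Fin n, b (Sum.inl i) = if a i = some 1 then some 1 else none := by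
    intro i
    cases ha : a i with
    | none => simp [hb, barMotif, polMotif, ha]
    | some x => fin_cases x <;> simp [hb, barMotif, polMotif, ha] <;> decide
  have hbr : ∀ j : Fin n, b (Sum.inr j) = if a j = some 0 then some 1 else none := by
    intro j
    cases ha : a j with
    | none => simp [hb, barMotif, polMotif, ha]
    | some x => fin_cases x <;> simp [hb, barMotif, polMotif, ha]
  rw [lagrange_eq_pm b]
  have hfilter0 : Finset.univ.filter (fun k => b k = some 0) = ∅ := by
    ext k
    rcases k with i | j
    · by_cases h : a i = some 1 <;> simp [hbl i, h]
    · by_cases h : a j = some 0 <;> simp [hbr j, h]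
  have hfilter1 : Finset.univ.filter (fun k => b k = some 1) = σ₀.disjSum τ₀ := by
    ext k
    rcases k with i | j
    · by_cases h : a i = some 1 <;> simp [hbl i, h, hσ₀]
    · by_cases h : a j = some 0 <;> simp [hbr j, h, hτ₀]
  rw [hfilter0, hfilter1, pm, ppm, Finset.prod_empty, mul_one, Finset.prod_disjSum,
    ← hσ, ← hτ]
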